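/- For all bounded measurable functions f, g : Σ_d → ℝ with |g|_δ < ∞ and every i ∈ ℕ, one has |∫ (f∘σ^i)·g dλ − (∫ f dλ)·(∫ g dλ)| ≤ ‖f‖_∞ · |g|_δ · δ^i. -/

import Mathlib

open MeasureTheory

noncomputable section

/-- The shift `σ` on `Σ_d = {0,…,d−1}^{ℕ*}` (sequences written `0`-indexed). -/
def shiftSigma (d : ℕ) (x : ℕ → Fin d) : ℕ → Fin d := fun j => x (j + 1)

/-- The cylinder `[w]` of sequences beginning with the word `w` of length `n`. -/
def cylSet (d n : ℕ) (w : Fin n → Fin d) : Set (ℕ → Fin d) :=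
  {x | ∀ i : Fin n, x (i : ℕ) = w i}

/-- `osc(g,B) = sup{|g(x)−g(y)| : x,y ∈ B}`. -/
def oscOn {d : ℕ} (g : (ℕ → Fin d) → ℝ) (B : Set (ℕ → Fin d)) : ℝ :=
  sSup {r : ℝ | ∃ x ∈ B, ∃ y ∈ B, r = |g x - g y|}

/-- The `n`-th term `δ^{-n} Σ_{|w|=n} osc(g,[w])·d^{-n}` of the `δ`-oscillation seminorm
`|g|_δ = sup_n (δ^{-n} Σ_{|w|=n} osc(g,[w])·d^{-n})`. -/
def oscTerm (d : ℕ) (δ : ℝ) (g : (ℕ → Fin d) → ℝ) (n : ℕ) : ℝ :=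
  δ ^ (-(n : ℤ)) * ∑ w : Fin n → Fin d, oscOn g (cylSet d n w) * (d : ℝ) ^ (-(n : ℤ))

namespace CorrAux

lemma shift_iter_apply (d i : ℕ) (x : ℕ → Fin d) (j : ℕ) :
    (shiftSigma d)^[i] x j = x (j + i) := by
  induction i generalizing x with
  | zero => rfl
  | succ n ih =>
    rw [Function.iterate_succ_apply, ih]
    rfl

lemma measurable_shift_iter (d i : ℕ) : Measurable ((shiftSigma d)^[i]) :=
  Measurable.iterate (measurable_pi_lambda _ (fun j => measurable_pi_apply (j + 1))) i

lemma measurableSet_cylSet (d n : ℕ) (w : Fin n → Fin d) : MeasurableSet (cylSet d n w) := by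
  have : cylSet d n w = ⋂ i : Fin n, (fun x : ℕ → Fin d => x (i : ℕ)) ⁻¹' {w i} := by
    ext x; simp [cylSet]
  rw [this]
  exact MeasurableSet.iInter fun i =>
    (measurable_pi_apply (i : ℕ)) (measurableSet_singleton (w i))

lemma mem_cylSet_self (d n : ℕ) (hd : 0 < d) (x : ℕ → Fin d) :
    x ∈ cylSet d n (fun k => x (k : ℕ)) := fun _ => rfl

lemma cylSet_nonempty (d n : ℕ) (hd : 0 < d) (w : Fin n → Fin d) :
    (cylSet d n w).Nonempty := by
  refine ⟨fun j => if h : j < n then w ⟨j, h⟩ else ⟨0, hd⟩, fun k => ?_⟩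
  simp [k.isLt]

/-- The collection of all cylinder sets. -/
def cylCol (d : ℕ) : Set (Set (ℕ → Fin d)) :=
  {s | ∃ (n : ℕ) (w : Fin n → Fin d), s = cylSet d n w}

lemma isPiSystem_cylCol (d : ℕ) : IsPiSystem (cylCol d) := by
  rintro s ⟨n, w, rfl⟩ t ⟨m, v, rfl⟩ ⟨x, hxw, hxv⟩
  refine ⟨max n m, fun k => x (k : ℕ), ?_⟩
  ext y
  constructor
  · rintro ⟨hyw, hyv⟩ k
    rcases lt_or_ge (k : ℕ) n with hk | hk
    · rw [hyw ⟨k, hk⟩, ← hxw ⟨k, hk⟩]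
    · have hk' : (k : ℕ) < m := by
        have := k.isLt; omega
      rw [hyv ⟨k, hk'⟩, ← hxv ⟨k, hk'⟩]
  · intro hy
    constructor
    · intro k
      have hk : (k : ℕ) < max n m := lt_of_lt_of_le k.isLt (le_max_left _ _)
      rw [show y (k : ℕ) = x (k : ℕ) from hy ⟨k, hk⟩, hxw k]
    · intro k
      have hk : (k : ℕ) < max n m := lt_of_lt_of_le k.isLt (le_max_right _ _)
      rw [show y (k : ℕ) = x (k : ℕ) from hy ⟨k, hk⟩, hxv k]

lemma generateFrom_cylCol (d : ℕ) :
    (inferInstance : MeasurableSpace (ℕ → Fin d)) =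
      MeasurableSpace.generateFrom (cylCol d) := by
  refine le_antisymm ?_ ?_
  · -- pi σ-algebra ≤ generated by cylinders
    have hmeas : ∀ j : ℕ, @Measurable _ _ (MeasurableSpace.generateFrom (cylCol d)) _
        (fun x : ℕ → Fin d => x j) := by
      intro j s _
      have hs : (fun x : ℕ → Fin d => x j) ⁻¹' s
          = ⋃ a ∈ s, (fun x : ℕ → Fin d => x j) ⁻¹' {a} := by
        ext x; simp
      rw [hs]
      refine MeasurableSet.biUnion s.to_countable fun a _ => ?_
      have : (fun x : ℕ → Fin d => x j) ⁻¹' {a} =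
          ⋃ (w : Fin (j + 1) → Fin d) (_ : w (Fin.last j) = a), cylSet d (j + 1) w := by
        ext x
        simp only [Set.mem_preimage, Set.mem_singleton_iff, Set.mem_iUnion]
        constructor
        · intro hx
          refine ⟨fun k => x (k : ℕ), by simpa [Fin.last] using hx, fun k => rfl⟩
        · rintro ⟨w, hw, hxw⟩
          have := hxw (Fin.last j)
          simp only [Fin.val_last] at this
          rw [this, hw]
      rw [this]
      exact MeasurableSet.iUnion fun w => MeasurableSet.iUnion fun _ =>
        MeasurableSpace.measurableSet_generateFrom ⟨j + 1, w, rfl⟩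
    exact iSup_le fun j => measurable_iff_comap_le.mp (hmeas j)
  · refine MeasurableSpace.generateFrom_le ?_
    rintro s ⟨n, w, rfl⟩
    exact measurableSet_cylSet d n w

lemma preimage_inter_eq_append (d i m : ℕ) (w : Fin i → Fin d) (v : Fin m → Fin d) :
    ((shiftSigma d)^[i]) ⁻¹' (cylSet d m v) ∩ cylSet d i w
      = cylSet d (i + m) (Fin.append w v) := by
  ext x
  simp only [Set.mem_inter_iff, Set.mem_preimage, cylSet, Set.mem_setOf_eq, shift_iter_apply]
  constructor
  · rintro ⟨h1, h2⟩ k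
    refine Fin.addCases (fun j => ?_) (fun j => ?_) k
    · rw [Fin.append_left]
      simpa using h2 j
    · rw [Fin.append_right]
      have := h1 j
      simpa [Nat.add_comm] using this
  · intro h
    constructor
    · intro j
      have := h (Fin.natAdd i j)
      rw [Fin.append_right] at this
      simpa [Nat.add_comm] using this
    · intro j
      have := h (Fin.castAdd m j)
      rw [Fin.append_left] at this
      simpa using this

lemma map_restrict_eq (d : ℕ) (hd : 2 ≤ d) (lam : Measure (ℕ → Fin d))
    [IsProbabilityMeasure lam]
    (hlam : ∀ (n : ℕ) (w : Fin n → Fin d), lam (cylSet d n w) = ((d : ENNReal))⁻¹ ^ n)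
    (i : ℕ) (w : Fin i → Fin d) :
    Measure.map ((shiftSigma d)^[i]) (lam.restrict (cylSet d i w))
      = ((d : ENNReal)⁻¹ ^ i) • lam := by
  haveI : IsFiniteMeasure (lam.restrict (cylSet d i w)) :=
    ⟨by rw [Measure.restrict_apply_univ]; exact (measure_lt_top lam _)⟩
  haveI : IsFiniteMeasure
      (Measure.map ((shiftSigma d)^[i]) (lam.restrict (cylSet d i w))) :=
    ⟨by
      rw [Measure.map_apply (measurable_shift_iter d i) MeasurableSet.univ]
      exact lt_of_le_of_lt (measure_mono (Set.subset_univ _))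
        (measure_lt_top (lam.restrict (cylSet d i w)) Set.univ)⟩
  refine ext_of_generate_finite (cylCol d) (generateFrom_cylCol d) (isPiSystem_cylCol d)
    ?_ ?_
  · rintro s ⟨m, v, rfl⟩
    rw [Measure.map_apply (measurable_shift_iter d i) (measurableSet_cylSet d m v),
      Measure.restrict_apply
        ((measurable_shift_iter d i) (measurableSet_cylSet d m v)),
      preimage_inter_eq_append, hlam, Measure.smul_apply, hlam, smul_eq_mul, pow_add]
  · rw [Measure.map_apply (measurable_shift_iter d i) MeasurableSet.univ,
      Set.preimage_univ, Measure.restrict_apply_univ, hlam,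
      Measure.smul_apply, smul_eq_mul, measure_univ, mul_one]

lemma lam_cyl_toReal (d : ℕ) (hd : 2 ≤ d) (lam : Measure (ℕ → Fin d))
    (hlam : ∀ (n : ℕ) (w : Fin n → Fin d), lam (cylSet d n w) = ((d : ENNReal))⁻¹ ^ n)
    (n : ℕ) (w : Fin n → Fin d) :
    (lam (cylSet d n w)).toReal = ((d : ℝ)⁻¹) ^ n := by
  rw [hlam]
  simp [ENNReal.toReal_pow, ENNReal.toReal_inv]

lemma setIntegral_comp_shift (d : ℕ) (hd : 2 ≤ d) (lam : Measure (ℕ → Fin d))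
    [IsProbabilityMeasure lam]
    (hlam : ∀ (n : ℕ) (w : Fin n → Fin d), lam (cylSet d n w) = ((d : ENNReal))⁻¹ ^ n)
    (i : ℕ) (w : Fin i → Fin d) (f : (ℕ → Fin d) → ℝ) (hf : Measurable f) :
    ∫ x in cylSet d i w, f ((shiftSigma d)^[i] x) ∂lam
      = ((d : ℝ)⁻¹) ^ i * ∫ x, f x ∂lam := by
  have h1 : ∫ x in cylSet d i w, f ((shiftSigma d)^[i] x) ∂lam
      = ∫ y, f y ∂(Measure.map ((shiftSigma d)^[i]) (lam.restrict (cylSet d i w))) :=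
    (integral_map (measurable_shift_iter d i).aemeasurable
      hf.aestronglyMeasurable).symm
  rw [h1, map_restrict_eq d hd lam hlam i w, integral_smul_measure]
  simp [ENNReal.toReal_pow, ENNReal.toReal_inv]

lemma integral_eq_sum_cyl (d : ℕ) (hd : 2 ≤ d) (lam : Measure (ℕ → Fin d))
    [IsProbabilityMeasure lam]
    (i : ℕ) (h : (ℕ → Fin d) → ℝ) (hint : Integrable h lam) :
    ∫ x, h x ∂lam = ∑ w : Fin i → Fin d, ∫ x in cylSet d i w, h x ∂lam := by
  have hunion : (⋃ w : Fin i → Fin d, cylSet d i w) = Set.univ := by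
    refine Set.eq_univ_of_forall fun x => Set.mem_iUnion.2 ?_
    exact ⟨fun k => x (k : ℕ), fun _ => rfl⟩
  have hdisj : Pairwise (Function.onFun Disjoint (fun w : Fin i → Fin d => cylSet d i w)) := by
    intro w v hwv
    refine Set.disjoint_left.2 fun x hxw hxv => hwv ?_
    funext k
    rw [← hxw k, ← hxv k]
  have := integral_iUnion (μ := lam) (f := h)
    (fun w : Fin i → Fin d => measurableSet_cylSet d i w) hdisj
    (by rw [hunion]; exact hint.integrableOn)
  rw [hunion] at this
  rw [← setIntegral_univ, this, tsum_fintype]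

end CorrAux

/-- **Exponential decay of correlations for the shift.** For all bounded measurable
`f, g : Σ_d → ℝ` with `|g|_δ < ∞` and every `i ∈ ℕ`,
`|∫ (f∘σ^i)·g dλ − (∫ f dλ)(∫ g dλ)| ≤ ‖f‖_∞ · |g|_δ · δ^i`, where `λ` is the uniform
Bernoulli measure on `Σ_d` (characterized by its values on cylinders). -/
theorem correlation_decay_shift (d : ℕ) (hd : 2 ≤ d)
    (δ : ℝ) (hδ₀ : 0 < δ) (hδ₁ : δ < 1)
    (lam : Measure (ℕ → Fin d)) [IsProbabilityMeasure lam]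
    (hlam : ∀ (n : ℕ) (w : Fin n → Fin d), lam (cylSet d n w) = ((d : ENNReal))⁻¹ ^ n)
    (f g : (ℕ → Fin d) → ℝ) (hf : Measurable f) (hg : Measurable g)
    (hfb : ∃ C : ℝ, ∀ x, |f x| ≤ C) (hgb : ∃ C : ℝ, ∀ x, |g x| ≤ C)
    (hgδ : BddAbove (Set.range (oscTerm d δ g)))
    (i : ℕ) :
    |(∫ x, f ((shiftSigma d)^[i] x) * g x ∂lam)
        - (∫ x, f x ∂lam) * (∫ x, g x ∂lam)|
      ≤ (⨆ x : ℕ → Fin d, |f x|) * (⨆ n : ℕ, oscTerm d δ g n) * δ ^ i := by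
  classical
  obtain ⟨Cf, hCf⟩ := hfb
  obtain ⟨Cg, hCg⟩ := hgb
  have hd0 : (0 : ℝ) < (d : ℝ) := by exact_mod_cast Nat.lt_of_lt_of_le Nat.zero_lt_two hd
  haveI : Nonempty (Fin d) := ⟨⟨0, by omega⟩⟩
  haveI : Nonempty (ℕ → Fin d) := ⟨fun _ => ⟨0, by omega⟩⟩
  set S := ⨆ x : ℕ → Fin d, |f x| with hSdef
  set T := ⨆ n : ℕ, oscTerm d δ g n with hTdef
  have hbddf : BddAbove (Set.range fun x : ℕ → Fin d => |f x|) :=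
    ⟨Cf, by rintro r ⟨x, rfl⟩; exact hCf x⟩
  have hSf : ∀ x, |f x| ≤ S := fun x => le_ciSup hbddf x
  have hS0 : 0 ≤ S := le_trans (abs_nonneg _) (hSf Classical.ofNonempty)
  have hTi : oscTerm d δ g i ≤ T := le_ciSup hgδ i
  have hσ : Measurable ((shiftSigma d)^[i]) := CorrAux.measurable_shift_iter d i
  have hfσ : Measurable fun x => f ((shiftSigma d)^[i] x) := hf.comp hσ
  have hgi : Integrable g lam :=
    (integrable_const Cg).mono' hg.aestronglyMeasurable
      (Filter.Eventually.of_forall fun x => by simpa [Real.norm_eq_abs] using hCg x)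
  have hfσi : Integrable (fun x => f ((shiftSigma d)^[i] x)) lam :=
    (integrable_const Cf).mono' hfσ.aestronglyMeasurable
      (Filter.Eventually.of_forall fun x => by simpa [Real.norm_eq_abs] using hCf _)
  have hCf0 : 0 ≤ Cf := le_trans (abs_nonneg _) (hCf Classical.ofNonempty)
  have hprodi : Integrable (fun x => f ((shiftSigma d)^[i] x) * g x) lam :=
    (integrable_const (Cf * Cg)).mono' (hfσ.mul hg).aestronglyMeasurable
      (Filter.Eventually.of_forall fun x => by
        simp only [Real.norm_eq_abs, abs_mul]
        exact mul_le_mul (hCf _) (hCg x) (abs_nonneg _) hCf0)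
  have hcylR : ∀ w : Fin i → Fin d, (lam (cylSet d i w)).toReal = ((d : ℝ)⁻¹) ^ i :=
    fun w => CorrAux.lam_cyl_toReal d hd lam hlam i w
  have hfint_w : ∀ w : Fin i → Fin d,
      ∫ x in cylSet d i w, f ((shiftSigma d)^[i] x) ∂lam = ((d : ℝ)⁻¹) ^ i * ∫ x, f x ∂lam :=
    fun w => CorrAux.setIntegral_comp_shift d hd lam hlam i w f hf
  have hdpow : ((d : ℝ)) ^ i * ((d : ℝ)⁻¹) ^ i = 1 := by
    rw [inv_pow, mul_inv_cancel₀ (pow_ne_zero _ (ne_of_gt hd0))]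
  -- the key estimate on each cylinder
  have key : ∀ w : Fin i → Fin d,
      |(∫ x in cylSet d i w, f ((shiftSigma d)^[i] x) * g x ∂lam)
          - (∫ x, f x ∂lam) * (∫ x in cylSet d i w, g x ∂lam)|
        ≤ S * oscOn g (cylSet d i w) * ((d : ℝ)⁻¹) ^ i := by
    intro w
    set B := ∫ x in cylSet d i w, g x ∂lam with hBdef
    set c := (d : ℝ) ^ i * B with hcdef
    have hoscBdd : BddAbove
        {r : ℝ | ∃ x ∈ cylSet d i w, ∃ y ∈ cylSet d i w, r = |g x - g y|} := by
      refine ⟨Cg + Cg, ?_⟩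
      rintro r ⟨x, -, y, -, rfl⟩
      exact le_trans (abs_sub_abs_le_abs_sub (g x) (g y) |> fun _ => abs_sub (g x) (g y))
        (add_le_add (hCg x) (hCg y))
    have hosc : ∀ x ∈ cylSet d i w, ∀ y ∈ cylSet d i w,
        |g x - g y| ≤ oscOn g (cylSet d i w) := fun x hx y hy =>
      le_csSup hoscBdd ⟨x, hx, y, hy, rfl⟩
    have hμlt : lam (cylSet d i w) < ⊤ := measure_lt_top _ _
    have hgc : ∀ x ∈ cylSet d i w, |g x - c| ≤ oscOn g (cylSet d i w) := by
      intro x hx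
      have h1 : ∫ y in cylSet d i w, (g x - g y) ∂lam = g x * ((d : ℝ)⁻¹) ^ i - B := by
        rw [integral_sub (integrableOn_const (C := g x) hμlt.ne) hgi.integrableOn,
          setIntegral_const, measureReal_def, hcylR w, smul_eq_mul, mul_comm]
      have h2 : ‖∫ y in cylSet d i w, (g x - g y) ∂lam‖
          ≤ oscOn g (cylSet d i w) * (lam (cylSet d i w)).toReal :=
        norm_setIntegral_le_of_norm_le_const hμlt
          (fun y hy => by simpa [Real.norm_eq_abs] using hosc x hx y hy)
      rw [h1, Real.norm_eq_abs, hcylR w] at h2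
      have h3 : |g x - c| = (d : ℝ) ^ i * |g x * ((d : ℝ)⁻¹) ^ i - B| := by
        rw [← abs_of_pos (pow_pos hd0 i), ← abs_mul]
        congr 1
        rw [mul_sub, ← mul_assoc, mul_comm ((d : ℝ) ^ i) (g x), mul_assoc, hdpow,
          mul_one, hcdef]
      calc |g x - c| = (d : ℝ) ^ i * |g x * ((d : ℝ)⁻¹) ^ i - B| := h3
        _ ≤ (d : ℝ) ^ i * (oscOn g (cylSet d i w) * ((d : ℝ)⁻¹) ^ i) :=
            mul_le_mul_of_nonneg_left h2 (le_of_lt (pow_pos hd0 i))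
        _ = oscOn g (cylSet d i w) := by
            rw [mul_comm (oscOn g (cylSet d i w)) _, ← mul_assoc, hdpow, one_mul]
    have hsplit : (∫ x in cylSet d i w, f ((shiftSigma d)^[i] x) * g x ∂lam)
        - (∫ x, f x ∂lam) * B
        = ∫ x in cylSet d i w, f ((shiftSigma d)^[i] x) * (g x - c) ∂lam := by
      have h3 : ∫ x in cylSet d i w, f ((shiftSigma d)^[i] x) * (g x - c) ∂lam
          = (∫ x in cylSet d i w, f ((shiftSigma d)^[i] x) * g x ∂lam)
            - ∫ x in cylSet d i w, f ((shiftSigma d)^[i] x) * c ∂lam := by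
        simp only [mul_sub]
        exact integral_sub hprodi.integrableOn (hfσi.mul_const c).integrableOn
      have h4 : ∫ x in cylSet d i w, f ((shiftSigma d)^[i] x) * c ∂lam
          = (∫ x, f x ∂lam) * B := by
        rw [integral_mul_const, hfint_w w, hcdef,
          show ((d : ℝ)⁻¹ ^ i * ∫ x, f x ∂lam) * ((d : ℝ) ^ i * B)
              = ((d : ℝ) ^ i * ((d : ℝ)⁻¹) ^ i) * ((∫ x, f x ∂lam) * B) by ring,
          hdpow, one_mul]
      rw [h3, h4]
    rw [hsplit]
    have hbound := norm_setIntegral_le_of_norm_le_const (C := S * oscOn g (cylSet d i w))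
      (f := fun x => f ((shiftSigma d)^[i] x) * (g x - c))
      hμlt (fun x hx => by
        simp only [Real.norm_eq_abs, abs_mul]
        exact mul_le_mul (hSf _) (hgc x hx) (abs_nonneg _) hS0)
    rw [Real.norm_eq_abs, measureReal_def, hcylR w] at hbound
    exact hbound
  -- sum over the partition into cylinders of length i
  have hsum1 : ∫ x, f ((shiftSigma d)^[i] x) * g x ∂lam
      = ∑ w : Fin i → Fin d, ∫ x in cylSet d i w, f ((shiftSigma d)^[i] x) * g x ∂lam :=
    CorrAux.integral_eq_sum_cyl d hd lam i _ hprodi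
  have hsum2 : ∫ x, g x ∂lam
      = ∑ w : Fin i → Fin d, ∫ x in cylSet d i w, g x ∂lam :=
    CorrAux.integral_eq_sum_cyl d hd lam i _ hgi
  have hstep : |(∫ x, f ((shiftSigma d)^[i] x) * g x ∂lam)
      - (∫ x, f x ∂lam) * (∫ x, g x ∂lam)|
      ≤ S * ∑ w : Fin i → Fin d, oscOn g (cylSet d i w) * ((d : ℝ)⁻¹) ^ i := by
    rw [hsum1, hsum2, Finset.mul_sum, ← Finset.sum_sub_distrib]
    refine le_trans (Finset.abs_sum_le_sum_abs _ _) ?_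
    rw [Finset.mul_sum]
    refine Finset.sum_le_sum fun w _ => ?_
    rw [← mul_assoc]
    exact key w
  have hδne : δ ^ i ≠ 0 := pow_ne_zero _ (ne_of_gt hδ₀)
  have hterm : ∑ w : Fin i → Fin d, oscOn g (cylSet d i w) * ((d : ℝ)⁻¹) ^ i
      = δ ^ i * oscTerm d δ g i := by
    have h5 : oscTerm d δ g i
        = (δ ^ i)⁻¹ * ∑ w : Fin i → Fin d, oscOn g (cylSet d i w) * ((d : ℝ)⁻¹) ^ i := by
      simp [oscTerm, zpow_neg, zpow_natCast, inv_pow]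
    rw [h5, ← mul_assoc, mul_inv_cancel₀ hδne, one_mul]
  calc |(∫ x, f ((shiftSigma d)^[i] x) * g x ∂lam)
      - (∫ x, f x ∂lam) * (∫ x, g x ∂lam)|
      ≤ S * ∑ w : Fin i → Fin d, oscOn g (cylSet d i w) * ((d : ℝ)⁻¹) ^ i := hstep
    _ = S * (δ ^ i * oscTerm d δ g i) := by rw [hterm]
    _ ≤ S * (δ ^ i * T) :=
        mul_le_mul_of_nonneg_left
          (mul_le_mul_of_nonneg_left hTi (pow_nonneg (le_of_lt hδ₀) i)) hS0
    _ = S * T * δ ^ i := by ring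

end
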